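/- Let (x_i) be a normalized 1-unconditional sequence in a real Banach space X. Then there exist constants c₁, c₂ > 0 with c₁·c₂ ≤ 2 such that for every finitely supported λ : ℕ → ℝ: J*(λ) ≤ c₁ · sup{ J((λ_i·a_i)_{i≥1}) : a : ℕ → ℝ finitely supported with J(a) ≤ 1 } and sup{ J((λ_i·a_i)_{i≥1}) : a finitely supported with J(a) ≤ 1 } ≤ c₂ · J*(λ). (This expresses that the operator norm of the diagonal multiplier with entries λ on the jamesification J(X) is equivalent, with product of constants at most 2, to the dual jamesification norm of λ.) -/
import Mathlib


open scoped BigOperators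


variable {X : Type*} [NormedAddCommGroup X] [NormedSpace ℝ X]

/-- A sequence is 1-unconditional if changing signs of coefficients does not change the
norm of finite linear combinations. -/
def OneUnconditional (x : ℕ → X) : Prop :=
  ∀ (s : Finset ℕ) (a ε : ℕ → ℝ), (∀ i, ε i = 1 ∨ ε i = -1) →
    ‖∑ i ∈ s, (ε i * a i) • x i‖ = ‖∑ i ∈ s, a i • x i‖

/-- The quantities whose supremum defines the jamesification norm `J(a)`:
`‖∑_{n<r} (∑_{i ∈ [k n, m n]} a i) • x (k n)‖` over all systems
`k 0 ≤ m 0 < k 1 ≤ m 1 < ⋯`. -/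
def jamesSet (x : ℕ → X) (a : ℕ → ℝ) : Set ℝ :=
  {v | ∃ (r : ℕ) (k m : ℕ → ℕ), (∀ n, k n ≤ m n) ∧ (∀ n, m n < k (n + 1)) ∧
    v = ‖∑ n ∈ Finset.range r, (∑ i ∈ Finset.Icc (k n) (m n), a i) • x (k n)‖}

/-- The jamesification norm of a finitely supported sequence of coefficients. -/
noncomputable def jamesNorm (x : ℕ → X) (a : ℕ → ℝ) : ℝ :=
  sSup (jamesSet x a)

/-- The dual jamesification norm:
`J*(λ) = sup { |∑ i, λ i * a i| : a finitely supported, J(a) ≤ 1 }`. -/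
noncomputable def jamesDualNorm (x : ℕ → X) (l : ℕ → ℝ) : ℝ :=
  sSup {v | ∃ a : ℕ → ℝ, (Function.support a).Finite ∧ jamesNorm x a ≤ 1 ∧
    v = |∑ᶠ i, l i * a i|}

/-- The quantities whose supremum defines the variation norm `V(a)`:
`‖∑_{n<r} (a (k n) - a (m n)) • x (k n)‖` over all systems
`k 0 < m 0 ≤ k 1 < m 1 ≤ ⋯`. -/
def varSet (x : ℕ → X) (a : ℕ → ℝ) : Set ℝ :=
  {v | ∃ (r : ℕ) (k m : ℕ → ℕ), (∀ n, k n < m n) ∧ (∀ n, m n ≤ k (n + 1)) ∧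
    v = ‖∑ n ∈ Finset.range r, (a (k n) - a (m n)) • x (k n)‖}

/-- The variation norm of a finitely supported sequence of coefficients. -/
noncomputable def varNorm (x : ℕ → X) (a : ℕ → ℝ) : ℝ :=
  sSup (varSet x a)

/-- The quantities whose supremum is the operator norm of the diagonal multiplier with
entries `l` acting on the jamesification: `J(l·a)` over finitely supported `a` in the unit
ball of the jamesification norm. -/
def multiplierSet (x : ℕ → X) (l : ℕ → ℝ) : Set ℝ :=
  {v | ∃ a : ℕ → ℝ, (Function.support a).Finite ∧ jamesNorm x a ≤ 1 ∧
    v = jamesNorm x (fun i => l i * a i)}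

lemma natIcc_inter_Icc (a b c d : ℕ) :
    Finset.Icc a b ∩ Finset.Icc c d = Finset.Icc (max a c) (min b d) := by
  ext j; simp only [Finset.mem_inter, Finset.mem_Icc]; omega

lemma blocks_k_strictMono {k m : ℕ → ℕ} (hkm : ∀ n, k n ≤ m n)
    (hmk : ∀ n, m n < k (n + 1)) : StrictMono k :=
  strictMono_nat_of_lt_succ fun n => lt_of_le_of_lt (hkm n) (hmk n)

lemma blocks_m_lt_k {k m : ℕ → ℕ} (hkm : ∀ n, k n ≤ m n)
    (hmk : ∀ n, m n < k (n + 1)) {n n' : ℕ} (h : n < n') : m n < k n' :=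
  lt_of_lt_of_le (hmk n) ((blocks_k_strictMono hkm hmk).monotone h)

lemma blocks_disjoint {k m : ℕ → ℕ} (hkm : ∀ n, k n ≤ m n)
    (hmk : ∀ n, m n < k (n + 1)) {n n' : ℕ} (h : n ≠ n') {j : ℕ}
    (h1 : j ∈ Finset.Icc (k n) (m n)) : j ∉ Finset.Icc (k n') (m n') := by
  intro h2
  simp only [Finset.mem_Icc] at h1 h2
  rcases lt_or_gt_of_ne h with hlt | hlt
  · exact absurd (h1.2.trans_lt (lt_of_lt_of_le (blocks_m_lt_k hkm hmk hlt) h2.1)) (lt_irrefl _)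
  · exact absurd (h2.2.trans_lt (lt_of_lt_of_le (blocks_m_lt_k hkm hmk hlt) h1.1)) (lt_irrefl _)

/-- every element of `jamesSet x a` is bounded by the ℓ¹ norm over any finset
containing the support. -/
lemma jamesSet_le_sum (x : ℕ → X) (hnorm : ∀ i, ‖x i‖ = 1) {a : ℕ → ℝ} {F : Finset ℕ}
    (hF : Function.support a ⊆ ↑F) : ∀ v ∈ jamesSet x a, v ≤ ∑ i ∈ F, |a i| := by
  rintro v ⟨r, k, m, hkm, hmk, rfl⟩
  calc ‖∑ n ∈ Finset.range r, (∑ i ∈ Finset.Icc (k n) (m n), a i) • x (k n)‖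
      ≤ ∑ n ∈ Finset.range r, ‖(∑ i ∈ Finset.Icc (k n) (m n), a i) • x (k n)‖ :=
        norm_sum_le _ _
    _ = ∑ n ∈ Finset.range r, |∑ i ∈ Finset.Icc (k n) (m n), a i| := by
        refine Finset.sum_congr rfl fun n _ => ?_
        rw [norm_smul, hnorm, mul_one, Real.norm_eq_abs]
    _ ≤ ∑ n ∈ Finset.range r, ∑ i ∈ Finset.Icc (k n) (m n) ∩ F, |a i| := by
        refine Finset.sum_le_sum fun n _ => ?_
        have : ∑ i ∈ Finset.Icc (k n) (m n), a i
            = ∑ i ∈ Finset.Icc (k n) (m n) ∩ F, a i := by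
          refine (Finset.sum_subset (Finset.inter_subset_left) fun j hj hj' => ?_).symm
          by_contra hne
          exact hj' (Finset.mem_inter.mpr ⟨hj, hF hne⟩)
        rw [this]
        exact Finset.abs_sum_le_sum_abs _ _
    _ = ∑ i ∈ (Finset.range r).biUnion (fun n => Finset.Icc (k n) (m n) ∩ F), |a i| := by
        refine (Finset.sum_biUnion ?_).symm
        intro n _ n' _ hnn'
        simp only [Finset.disjoint_left]
        intro j hj hj'
        exact blocks_disjoint hkm hmk hnn' (Finset.mem_inter.mp hj).1
          (Finset.mem_inter.mp hj').1
    _ ≤ ∑ i ∈ F, |a i| := by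
        refine Finset.sum_le_sum_of_subset_of_nonneg ?_ (fun i _ _ => abs_nonneg _)
        intro j hj
        simp only [Finset.mem_biUnion] at hj
        obtain ⟨n, _, hj⟩ := hj
        exact (Finset.mem_inter.mp hj).2

lemma jamesSet_bddAbove (x : ℕ → X) (hnorm : ∀ i, ‖x i‖ = 1) {a : ℕ → ℝ}
    (ha : (Function.support a).Finite) : BddAbove (jamesSet x a) :=
  ⟨∑ i ∈ ha.toFinset, |a i|, fun v hv =>
    jamesSet_le_sum x hnorm (by simp) v hv⟩

lemma zero_mem_jamesSet (x : ℕ → X) (a : ℕ → ℝ) : (0 : ℝ) ∈ jamesSet x a :=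
  ⟨0, id, id, fun n => le_refl n, fun n => Nat.lt_succ_self n, by simp⟩

lemma jamesNorm_nonneg (x : ℕ → X) (hnorm : ∀ i, ‖x i‖ = 1) {a : ℕ → ℝ}
    (ha : (Function.support a).Finite) : 0 ≤ jamesNorm x a :=
  le_csSup (jamesSet_bddAbove x hnorm ha) (zero_mem_jamesSet x a)


/-- sign invariance along an injection -/
lemma uncond_inj {x : ℕ → X} (hu : OneUnconditional x) {k : ℕ → ℕ}
    (hk : Function.Injective k) (s : Finset ℕ) (d ε : ℕ → ℝ)
    (hε : ∀ n, ε n = 1 ∨ ε n = -1) :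
    ‖∑ n ∈ s, (ε n * d n) • x (k n)‖ = ‖∑ n ∈ s, d n • x (k n)‖ := by
  classical
  set d' : ℕ → ℝ := fun i => if h : ∃ n ∈ s, k n = i then d h.choose else 0 with hd'
  set ε' : ℕ → ℝ := fun i => if h : ∃ n ∈ s, k n = i then ε h.choose else 1 with hε'
  have hchoose : ∀ n ∈ s, ∀ (h : ∃ n' ∈ s, k n' = k n), h.choose = n := by
    intro n hn h
    exact hk h.choose_spec.2
  have hd'k : ∀ n ∈ s, d' (k n) = d n := by
    intro n hn
    have h : ∃ n' ∈ s, k n' = k n := ⟨n, hn, rfl⟩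
    simp only [hd', dif_pos h, hchoose n hn h]
  have hε'k : ∀ n ∈ s, ε' (k n) = ε n := by
    intro n hn
    have h : ∃ n' ∈ s, k n' = k n := ⟨n, hn, rfl⟩
    simp only [hε', dif_pos h, hchoose n hn h]
  have hε'' : ∀ i, ε' i = 1 ∨ ε' i = -1 := by
    intro i
    by_cases h : ∃ n ∈ s, k n = i
    · simp only [hε', dif_pos h]; exact hε _
    · simp only [hε', dif_neg h]; trivial
  have h1 : ∑ n ∈ s, (ε n * d n) • x (k n) = ∑ i ∈ s.image k, (ε' i * d' i) • x i := by
    rw [Finset.sum_image (fun n _ n' _ h => hk h)]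
    exact Finset.sum_congr rfl fun n hn => by rw [hd'k n hn, hε'k n hn]
  have h2 : ∑ n ∈ s, d n • x (k n) = ∑ i ∈ s.image k, d' i • x i := by
    rw [Finset.sum_image (fun n _ n' _ h => hk h)]
    exact Finset.sum_congr rfl fun n hn => by rw [hd'k n hn]
  rw [h1, h2, hu (s.image k) d' ε' hε'']

/-- star inequality: `∑ |d n| |f (x (k n))| ≤ ‖∑ d n • x (k n)‖` for `‖f‖ ≤ 1`. -/
lemma star_ineq {x : ℕ → X} (hu : OneUnconditional x) {f : X →L[ℝ] ℝ} (hf : ‖f‖ ≤ 1)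
    {k : ℕ → ℕ} (hk : Function.Injective k) (s : Finset ℕ) (d : ℕ → ℝ) :
    ∑ n ∈ s, |d n| * |f (x (k n))| ≤ ‖∑ n ∈ s, d n • x (k n)‖ := by
  classical
  set ε : ℕ → ℝ := fun n => if d n * f (x (k n)) < 0 then -1 else 1 with hε
  have hεs : ∀ n, ε n = 1 ∨ ε n = -1 := by
    intro n; by_cases h : d n * f (x (k n)) < 0 <;> simp [hε, h]
  have key : ∀ n, |d n| * |f (x (k n))| = (ε n * d n) * f (x (k n)) := by
    intro n
    rw [← abs_mul]
    by_cases h : d n * f (x (k n)) < 0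
    · simp only [hε, if_pos h]; rw [abs_of_neg h]; ring
    · simp only [hε, if_neg h]; rw [abs_of_nonneg (not_lt.mp h)]; ring
  calc ∑ n ∈ s, |d n| * |f (x (k n))| = ∑ n ∈ s, (ε n * d n) * f (x (k n)) :=
        Finset.sum_congr rfl fun n _ => key n
    _ = f (∑ n ∈ s, (ε n * d n) • x (k n)) := by
        rw [map_sum]
        exact Finset.sum_congr rfl fun n _ => by rw [map_smul, smul_eq_mul]
    _ ≤ ‖∑ n ∈ s, (ε n * d n) • x (k n)‖ := by
        refine le_trans (le_abs_self _) ?_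
        rw [← Real.norm_eq_abs]
        calc ‖f (∑ n ∈ s, (ε n * d n) • x (k n))‖
            ≤ ‖f‖ * ‖∑ n ∈ s, (ε n * d n) • x (k n)‖ := f.le_opNorm _
          _ ≤ 1 * ‖∑ n ∈ s, (ε n * d n) • x (k n)‖ := by
              exact mul_le_mul_of_nonneg_right hf (norm_nonneg _)
          _ = _ := one_mul _
    _ = ‖∑ n ∈ s, d n • x (k n)‖ := uncond_inj hu hk s d ε hεs

/-- diagonal contraction: multiplying coefficients by scalars of modulus ≤ 1. -/
lemma diag_contract {x : ℕ → X} (hu : OneUnconditional x) {k : ℕ → ℕ}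
    (hk : Function.Injective k) (u : Finset ℕ) (t d : ℕ → ℝ)
    (ht : ∀ n, |t n| ≤ 1) :
    ‖∑ n ∈ u, (t n * d n) • x (k n)‖ ≤ ‖∑ n ∈ u, d n • x (k n)‖ := by
  classical
  have key : ∀ s : Finset ℕ,
      ‖∑ n ∈ u, (if n ∈ s then t n * d n else d n) • x (k n)‖
        ≤ ‖∑ n ∈ u, d n • x (k n)‖ := by
    intro s
    induction s using Finset.induction_on with
    | empty => simp
    | @insert j s hj ih =>
      set c₂ : ℕ → ℝ := fun n => if n ∈ s then t n * d n else d n with hc₂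
      set ε : ℕ → ℝ := fun n => if n = j then -1 else 1 with hεdef
      have hεs : ∀ n, ε n = 1 ∨ ε n = -1 := by
        intro n; by_cases h : n = j <;> simp [hεdef, h]
      set θ : ℝ := (1 + t j) / 2 with hθdef
      have hθ0 : 0 ≤ θ := by
        have := neg_le_of_abs_le (ht j); rw [hθdef]; linarith
      have hθ1 : θ ≤ 1 := by
        have := le_of_abs_le (ht j); rw [hθdef]; linarith
      have hident : ∑ n ∈ u, (if n ∈ insert j s then t n * d n else d n) • x (k n)
          = θ • (∑ n ∈ u, c₂ n • x (k n)) + (1 - θ) • (∑ n ∈ u, (ε n * c₂ n) • x (k n)) := by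
        rw [Finset.smul_sum, Finset.smul_sum, ← Finset.sum_add_distrib]
        refine Finset.sum_congr rfl fun n _ => ?_
        by_cases h : n = j
        · subst h
          simp only [Finset.mem_insert, true_or, if_pos, hc₂, hεdef, if_neg hj, if_pos rfl]
          rw [smul_smul, smul_smul, ← add_smul]
          congr 1
          rw [hθdef]; ring
        · have h1 : (if n ∈ insert j s then t n * d n else d n) = c₂ n := by
            simp [hc₂, Finset.mem_insert, h]
          rw [h1]
          simp only [hc₂, hεdef, if_neg h]
          rw [smul_smul, smul_smul, ← add_smul, one_mul]
          congr 1
          ring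
      rw [hident]
      calc ‖θ • (∑ n ∈ u, c₂ n • x (k n)) + (1 - θ) • (∑ n ∈ u, (ε n * c₂ n) • x (k n))‖
          ≤ θ * ‖∑ n ∈ u, c₂ n • x (k n)‖ + (1 - θ) * ‖∑ n ∈ u, (ε n * c₂ n) • x (k n)‖ := by
            refine le_trans (norm_add_le _ _) ?_
            rw [norm_smul, norm_smul, Real.norm_eq_abs, Real.norm_eq_abs,
              abs_of_nonneg hθ0, abs_of_nonneg (by linarith : (0:ℝ) ≤ 1 - θ)]
        _ = θ * ‖∑ n ∈ u, c₂ n • x (k n)‖ + (1 - θ) * ‖∑ n ∈ u, c₂ n • x (k n)‖ := by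
            rw [uncond_inj hu hk u c₂ ε hεs]
        _ = ‖∑ n ∈ u, c₂ n • x (k n)‖ := by ring
        _ ≤ ‖∑ n ∈ u, d n • x (k n)‖ := ih
  calc ‖∑ n ∈ u, (t n * d n) • x (k n)‖
      = ‖∑ n ∈ u, (if n ∈ u then t n * d n else d n) • x (k n)‖ := by
        congr 1
        exact Finset.sum_congr rfl fun n hn => by rw [if_pos hn]
    _ ≤ _ := key u


/-- any "generalized configuration" indexed by a finset gives an element of jamesSet. -/
lemma config_mem_jamesSet (x : ℕ → X) (a : ℕ → ℝ) (s : Finset ℕ) (u v : ℕ → ℕ)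
    (huv : ∀ n ∈ s, u n ≤ v n)
    (hord : ∀ n ∈ s, ∀ n' ∈ s, n < n' → v n < u n') :
    ‖∑ n ∈ s, (∑ j ∈ Finset.Icc (u n) (v n), a j) • x (u n)‖ ∈ jamesSet x a := by
  classical
  set c := s.card with hc
  set e := s.orderIsoOfFin rfl with he
  set M := s.sup v + 1 with hM
  set k' : ℕ → ℕ := fun n => if h : n < c then u (e ⟨n, h⟩) else M + n with hk'
  set m' : ℕ → ℕ := fun n => if h : n < c then v (e ⟨n, h⟩) else M + n with hm'
  have hmem : ∀ (n : ℕ) (h : n < c), (e ⟨n, h⟩ : ℕ) ∈ s := fun n h => (e ⟨n, h⟩).2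
  have hlt : ∀ (n n' : ℕ) (h : n < c) (h' : n' < c), n < n' →
      (e ⟨n, h⟩ : ℕ) < (e ⟨n', h'⟩ : ℕ) := by
    intro n n' h h' hnn'
    exact e.strictMono (by exact hnn')
  refine ⟨c, k', m', ?_, ?_, ?_⟩
  · intro n
    by_cases h : n < c
    · simp only [hk', hm', dif_pos h]; exact huv _ (hmem n h)
    · simp only [hk', hm', dif_neg h]; exact le_refl _
  · intro n
    by_cases h : n + 1 < c
    · have hn : n < c := Nat.lt_of_succ_lt h
      simp only [hk', hm', dif_pos h, dif_pos hn]
      exact hord _ (hmem n hn) _ (hmem _ h) (hlt n (n+1) hn h (Nat.lt_succ_self n))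
    · by_cases hn : n < c
      · simp only [hk', hm', dif_pos hn, dif_neg h]
        have : v (e ⟨n, hn⟩) ≤ s.sup v := Finset.le_sup (hmem n hn)
        omega
      · simp only [hk', hm', dif_neg hn, dif_neg h]; omega
  · congr 1
    refine (Finset.sum_bij (fun (n : ℕ) (hn : n ∈ Finset.range c) =>
      (e ⟨n, Finset.mem_range.mp hn⟩ : ℕ)) ?_ ?_ ?_ ?_).symm
    · intro n hn; exact hmem _ _
    · intro n hn n' hn' hee
      have h2 := e.injective (Subtype.ext hee)
      exact congrArg Fin.val h2
    · intro b hb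
      refine ⟨(e.symm ⟨b, hb⟩ : Fin c), Finset.mem_range.mpr (e.symm ⟨b, hb⟩).2, ?_⟩
      simp
    · intro n hn
      have h : n < c := Finset.mem_range.mp hn
      simp only [hk', hm', dif_pos h]

lemma config_le_jamesNorm (x : ℕ → X) {a : ℕ → ℝ}
    (hbdd : BddAbove (jamesSet x a)) (s : Finset ℕ) (u v : ℕ → ℕ)
    (huv : ∀ n ∈ s, u n ≤ v n)
    (hord : ∀ n ∈ s, ∀ n' ∈ s, n < n' → v n < u n') :
    ‖∑ n ∈ s, (∑ j ∈ Finset.Icc (u n) (v n), a j) • x (u n)‖ ≤ jamesNorm x a :=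
  le_csSup hbdd (config_mem_jamesSet x a s u v huv hord)

/-- the full sum is dominated by the james norm. -/
lemma abs_finsum_le (x : ℕ → X) (hnorm : ∀ i, ‖x i‖ = 1) {c : ℕ → ℝ}
    (hc : (Function.support c).Finite) (hbdd : BddAbove (jamesSet x c)) :
    |∑ᶠ i, c i| ≤ jamesNorm x c := by
  classical
  set N := hc.toFinset.sup id with hN
  have hsupp : Function.support c ⊆ ↑(Finset.Icc 0 N) := by
    intro i hi
    simp only [Finset.coe_Icc, Set.mem_Icc]
    exact ⟨Nat.zero_le _, Finset.le_sup (f := id) (hc.mem_toFinset.mpr hi)⟩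
  have hval : ∑ᶠ i, c i = ∑ i ∈ Finset.Icc 0 N, c i :=
    finsum_eq_sum_of_support_subset c hsupp
  have hmem : |∑ᶠ i, c i| ∈ jamesSet x c := by
    refine ⟨1, fun n => n * (N + 1), fun n => n * (N + 1) + N, fun n => Nat.le_add_right _ _,
      fun n => ?_, ?_⟩
    · show n * (N + 1) + N < (n + 1) * (N + 1)
      have : (n + 1) * (N + 1) = n * (N + 1) + (N + 1) := by ring
      omega
    · rw [Finset.sum_range_one]
      simp only [Nat.zero_mul, Nat.zero_add]
      rw [norm_smul, hnorm, mul_one, Real.norm_eq_abs, hval]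
  exact le_csSup hbdd hmem

lemma abs_coord_le (x : ℕ → X) (hnorm : ∀ i, ‖x i‖ = 1) (a : ℕ → ℝ)
    (hbdd : BddAbove (jamesSet x a)) (i : ℕ) : |a i| ≤ jamesNorm x a := by
  have hmem : |a i| ∈ jamesSet x a := by
    refine ⟨1, fun n => i + n, fun n => i + n, fun n => le_refl _, fun n => by show i + n < i + (n+1); omega, ?_⟩
    rw [Finset.sum_range_one]
    simp only [Nat.add_zero, Finset.Icc_self, Finset.sum_singleton]
    rw [norm_smul, hnorm, mul_one, Real.norm_eq_abs]
  exact le_csSup hbdd hmem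

lemma jamesNorm_zero (x : ℕ → X) : jamesNorm x (0 : ℕ → ℝ) = 0 := by
  have h1 : jamesSet x (0 : ℕ → ℝ) = {0} := by
    ext w
    constructor
    · rintro ⟨r, k, m, hkm, hmk, rfl⟩
      simp
    · rintro rfl
      exact ⟨0, id, id, fun n => le_refl n, fun n => Nat.lt_succ_self n, by simp⟩
  rw [jamesNorm, h1, csSup_singleton]

lemma key_b_bound {x : ℕ → X} (hnorm : ∀ i, ‖x i‖ = 1) (hu : OneUnconditional x)
    {f : X →L[ℝ] ℝ} (hf : ‖f‖ ≤ 1) {a : ℕ → ℝ}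
    (hbdd : BddAbove (jamesSet x a)) (ha1 : jamesNorm x a ≤ 1)
    (r : ℕ) {k m : ℕ → ℕ} (hkm : ∀ n, k n ≤ m n) (hmk : ∀ n, m n < k (n + 1)) :
    jamesNorm x (fun i =>
      (∑ n ∈ Finset.range r, if i ∈ Finset.Icc (k n) (m n) then f (x (k n)) else 0) * a i)
      ≤ 2 := by
  classical
  set b : ℕ → ℝ := fun i =>
    (∑ n ∈ Finset.range r, if i ∈ Finset.Icc (k n) (m n) then f (x (k n)) else 0) * a i
    with hbdef
  have hk_mono : StrictMono k := blocks_k_strictMono hkm hmk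
  have ht1 : ∀ i, |f (x i)| ≤ 1 := by
    intro i
    calc |f (x i)| = ‖f (x i)‖ := (Real.norm_eq_abs _).symm
      _ ≤ ‖f‖ * ‖x i‖ := f.le_opNorm _
      _ ≤ 1 * 1 := by
          rw [hnorm]
          exact mul_le_mul_of_nonneg_right hf zero_le_one
      _ = 1 := one_mul 1
  refine Real.sSup_le ?_ (by norm_num)
  rintro w ⟨s, p, q, hpq, hqp, rfl⟩
  have hp_mono : StrictMono p := blocks_k_strictMono hpq hqp
  set A : ℕ → ℕ → ℝ :=
    fun mm n => ∑ j ∈ Finset.Icc (max (p mm) (k n)) (min (q mm) (m n)), a j with hA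
  have hAempty : ∀ mm n, min (q mm) (m n) < max (p mm) (k n) → A mm n = 0 := by
    intro mm n h
    simp only [hA]
    rw [Finset.Icc_eq_empty (not_le.mpr h), Finset.sum_empty]
  -- Step 1 : rewrite interval sums of b
  have hB : ∀ mm, (∑ j ∈ Finset.Icc (p mm) (q mm), b j)
      = ∑ n ∈ Finset.range r, f (x (k n)) * A mm n := by
    intro mm
    calc ∑ j ∈ Finset.Icc (p mm) (q mm), b j
        = ∑ j ∈ Finset.Icc (p mm) (q mm), ∑ n ∈ Finset.range r,
            (if j ∈ Finset.Icc (k n) (m n) then f (x (k n)) * a j else 0) := by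
          refine Finset.sum_congr rfl fun j _ => ?_
          simp only [hbdef]
          rw [Finset.sum_mul]
          exact Finset.sum_congr rfl fun n _ => by rw [ite_mul, zero_mul]
      _ = ∑ n ∈ Finset.range r, ∑ j ∈ Finset.Icc (p mm) (q mm),
            (if j ∈ Finset.Icc (k n) (m n) then f (x (k n)) * a j else 0) := Finset.sum_comm
      _ = ∑ n ∈ Finset.range r, f (x (k n)) * A mm n := by
          refine Finset.sum_congr rfl fun n _ => ?_
          rw [Finset.sum_ite_mem, natIcc_inter_Icc]
          simp only [hA]
          rw [Finset.mul_sum]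
  -- Step 2 : split into first-piece part and inner parts
  set B1 : ℕ → ℝ := fun mm =>
    ∑ n ∈ (Finset.range r).filter (fun n => k n ≤ p mm), f (x (k n)) * A mm n with hB1def
  set B2 : ℕ → ℝ := fun mm =>
    ∑ n ∈ (Finset.range r).filter (fun n => p mm < k n ∧ k n ≤ q mm),
      f (x (k n)) * A mm n with hB2def
  have hsplit : ∀ mm, (∑ j ∈ Finset.Icc (p mm) (q mm), b j) = B1 mm + B2 mm := by
    intro mm
    rw [hB mm, ← Finset.sum_filter_add_sum_filter_not (Finset.range r) (fun n => k n ≤ p mm)]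
    congr 1
    simp only [hB2def]
    refine (Finset.sum_subset ?_ ?_).symm
    · intro n hn
      rw [Finset.mem_filter] at hn ⊢
      exact ⟨hn.1, not_le.mpr hn.2.1⟩
    · intro n hn hn'
      rw [Finset.mem_filter] at hn
      have hq : q mm < k n := by
        by_contra hcon
        push_neg at hcon
        exact hn' (Finset.mem_filter.mpr ⟨hn.1, not_le.mp hn.2, hcon⟩)
      have hz : A mm n = 0 := hAempty mm n (lt_of_le_of_lt (min_le_left _ _)
        (lt_of_lt_of_le hq (le_max_right _ _)))
      rw [hz, mul_zero]
  have key : ‖∑ mm ∈ Finset.range s, (∑ j ∈ Finset.Icc (p mm) (q mm), b j) • x (p mm)‖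
      = ‖∑ mm ∈ Finset.range s, (B1 mm • x (p mm) + B2 mm • x (p mm))‖ := by
    congr 1
    refine Finset.sum_congr rfl fun mm _ => ?_
    rw [hsplit mm, add_smul]
  rw [key, Finset.sum_add_distrib]
  refine le_trans (norm_add_le _ _) ?_
  -- Step 3 : bound for the W1 part
  have hW1 : ‖∑ mm ∈ Finset.range s, B1 mm • x (p mm)‖ ≤ 1 := by
    set P : ℕ → Prop := fun mm => ∃ n, n < r ∧ k n ≤ p mm ∧ p mm ≤ m n with hP
    set ν : ℕ → ℕ := fun mm => if h : P mm then h.choose else 0 with hν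
    have hνspec : ∀ mm, P mm → ν mm < r ∧ k (ν mm) ≤ p mm ∧ p mm ≤ m (ν mm) := by
      intro mm h
      simp only [hν, dif_pos h]
      exact h.choose_spec
    set τ : ℕ → ℝ := fun mm => if P mm then f (x (k (ν mm))) else 0 with hτ
    set C : ℕ → ℝ := fun mm => if P mm then A mm (ν mm) else 0 with hC
    have hτ1 : ∀ mm, |τ mm| ≤ 1 := by
      intro mm
      by_cases h : P mm
      · simp only [hτ, if_pos h]; exact ht1 _
      · simp only [hτ, if_neg h, abs_zero]; exact zero_le_one
    have hB1C : ∀ mm, B1 mm = τ mm * C mm := by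
      intro mm
      by_cases h : P mm
      · obtain ⟨hr, hk1, hk2⟩ := hνspec mm h
        rw [show τ mm = f (x (k (ν mm))) by simp only [hτ, if_pos h],
          show C mm = A mm (ν mm) by simp only [hC, if_pos h]]
        simp only [hB1def]
        refine Finset.sum_eq_single_of_mem (ν mm) ?_ ?_
        · simp only [Finset.mem_filter, Finset.mem_range]
          exact ⟨hr, hk1⟩
        · intro n hn hne
          simp only [Finset.mem_filter, Finset.mem_range] at hn
          have hmn : m n < p mm := by
            by_contra hcon
            push_neg at hcon
            exact blocks_disjoint hkm hmk hne
              (Finset.mem_Icc.mpr ⟨hn.2, hcon⟩) (Finset.mem_Icc.mpr ⟨hk1, hk2⟩)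
          have hz : A mm n = 0 := hAempty mm n (lt_of_le_of_lt (min_le_right _ _)
            (lt_of_lt_of_le hmn (le_max_left _ _)))
          rw [hz, mul_zero]
      · rw [show τ mm = 0 by simp only [hτ, if_neg h], zero_mul]
        simp only [hB1def]
        refine Finset.sum_eq_zero fun n hn => ?_
        simp only [Finset.mem_filter, Finset.mem_range] at hn
        have hmn : m n < p mm := by
          by_contra hcon
          push_neg at hcon
          exact h ⟨n, hn.1, hn.2, hcon⟩
        have hz : A mm n = 0 := hAempty mm n (lt_of_le_of_lt (min_le_right _ _)
          (lt_of_lt_of_le hmn (le_max_left _ _)))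
        rw [hz, mul_zero]
    calc ‖∑ mm ∈ Finset.range s, B1 mm • x (p mm)‖
        = ‖∑ mm ∈ Finset.range s, (τ mm * C mm) • x (p mm)‖ := by
          congr 1
          exact Finset.sum_congr rfl fun mm _ => by rw [hB1C mm]
      _ ≤ ‖∑ mm ∈ Finset.range s, C mm • x (p mm)‖ :=
          diag_contract hu hp_mono.injective _ τ C hτ1
      _ = ‖∑ mm ∈ (Finset.range s).filter P, C mm • x (p mm)‖ := by
          congr 1
          refine (Finset.sum_subset (Finset.filter_subset _ _) ?_).symm
          intro mm hmm hmm'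
          have hnP : ¬ P mm := fun hP' => hmm' (Finset.mem_filter.mpr ⟨hmm, hP'⟩)
          rw [show C mm = 0 by simp only [hC, if_neg hnP], zero_smul]
      _ = ‖∑ mm ∈ (Finset.range s).filter P,
            (∑ j ∈ Finset.Icc (p mm) (min (q mm) (m (ν mm))), a j) • x (p mm)‖ := by
          congr 1
          refine Finset.sum_congr rfl fun mm hmm => ?_
          have hPmm := (Finset.mem_filter.mp hmm).2
          obtain ⟨hr, hk1, hk2⟩ := hνspec mm hPmm
          rw [show C mm = A mm (ν mm) by simp only [hC, if_pos hPmm]]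
          simp only [hA]
          rw [max_eq_left hk1]
      _ ≤ jamesNorm x a := by
          refine config_le_jamesNorm x hbdd _ p (fun mm => min (q mm) (m (ν mm))) ?_ ?_
          · intro mm hmm
            have hPmm := (Finset.mem_filter.mp hmm).2
            exact le_min (hpq mm) (hνspec mm hPmm).2.2
          · intro mm _ mm' _ hlt
            calc min (q mm) (m (ν mm)) ≤ q mm := min_le_left _ _
              _ < p (mm + 1) := hqp mm
              _ ≤ p mm' := hp_mono.monotone (Nat.succ_le_of_lt hlt)
      _ ≤ 1 := ha1
  -- Step 4 : bound for the W2 part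
  have hW2 : ‖∑ mm ∈ Finset.range s, B2 mm • x (p mm)‖ ≤ 1 := by
    set W2 := ∑ mm ∈ Finset.range s, B2 mm • x (p mm) with hW2def
    set Q : ℕ → Prop := fun n => ∃ mm, mm < s ∧ p mm < k n ∧ k n ≤ q mm with hQ
    set μ : ℕ → ℕ := fun n => if h : Q n then h.choose else 0 with hμ
    have hμspec : ∀ n, Q n → μ n < s ∧ p (μ n) < k n ∧ k n ≤ q (μ n) := by
      intro n h
      simp only [hμ, dif_pos h]
      exact h.choose_spec
    have hμuniq : ∀ n mm, mm < s → p mm < k n → k n ≤ q mm → μ n = mm := by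
      intro n mm hs1 h1 h2
      have hQn : Q n := ⟨mm, hs1, h1, h2⟩
      obtain ⟨hs', h1', h2'⟩ := hμspec n hQn
      by_contra hne
      rcases lt_or_gt_of_ne hne with hlt | hlt
      · have e1 : q (μ n) < p (μ n + 1) := hqp (μ n)
        have e2 : p (μ n + 1) ≤ p mm := hp_mono.monotone (Nat.succ_le_of_lt hlt)
        omega
      · have e1 : q mm < p (mm + 1) := hqp mm
        have e2 : p (mm + 1) ≤ p (μ n) := hp_mono.monotone (Nat.succ_le_of_lt hlt)
        omega
    set F' : ℕ → Finset ℕ :=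
      fun mm => (Finset.range r).filter (fun n => p mm < k n ∧ k n ≤ q mm) with hF'
    have hdisj : ∀ mm ∈ Finset.range s, ∀ mm' ∈ Finset.range s, mm ≠ mm' →
        Disjoint (F' mm) (F' mm') := by
      intro mm hmm mm' hmm' hne
      rw [Finset.disjoint_left]
      intro n hn hn'
      simp only [hF', Finset.mem_filter] at hn hn'
      have e1 := hμuniq n mm (Finset.mem_range.mp hmm) hn.2.1 hn.2.2
      have e2 := hμuniq n mm' (Finset.mem_range.mp hmm') hn'.2.1 hn'.2.2
      exact hne (e1 ▸ e2 ▸ rfl)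
    by_cases hW20 : W2 = 0
    · rw [hW20, norm_zero]; exact zero_le_one
    obtain ⟨g, hg1, hgW⟩ := exists_dual_vector'' ℝ W2
    have hg_coord : ∀ i, |g (x i)| ≤ 1 := by
      intro i
      calc |g (x i)| = ‖g (x i)‖ := (Real.norm_eq_abs _).symm
        _ ≤ ‖g‖ * ‖x i‖ := g.le_opNorm _
        _ ≤ 1 * 1 := by
            rw [hnorm]
            exact mul_le_mul_of_nonneg_right hg1 zero_le_one
        _ = 1 := one_mul 1
    set N := (Finset.range s).biUnion F' with hN
    set φ : ℕ → ℝ := fun n => (f (x (k n)) * A (μ n) n) * g (x (p (μ n))) with hφ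
    have hgW2 : g W2 = ∑ n ∈ N, φ n := by
      have e0 : ∑ n ∈ N, φ n = ∑ mm ∈ Finset.range s, ∑ n ∈ F' mm, φ n :=
        Finset.sum_biUnion hdisj
      rw [e0, hW2def, map_sum]
      refine Finset.sum_congr rfl fun mm hmm => ?_
      rw [map_smul, smul_eq_mul]
      simp only [hB2def]
      rw [Finset.sum_mul]
      refine Finset.sum_congr rfl fun n hn => ?_
      simp only [hF', Finset.mem_filter, Finset.mem_range] at hn
      have e := hμuniq n mm (Finset.mem_range.mp hmm) hn.2.1 hn.2.2
      simp only [hφ, e]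
    have hφle : ∀ n ∈ N, φ n ≤ |A (μ n) n| * |f (x (k n))| := by
      intro n _
      calc φ n ≤ |φ n| := le_abs_self _
        _ = |f (x (k n))| * |A (μ n) n| * |g (x (p (μ n)))| := by
            simp only [hφ]
            rw [abs_mul, abs_mul]
        _ ≤ |f (x (k n))| * |A (μ n) n| * 1 := by
            refine mul_le_mul_of_nonneg_left (hg_coord _) ?_
            positivity
        _ = |A (μ n) n| * |f (x (k n))| := by ring
    have hstar : ∑ n ∈ N, |A (μ n) n| * |f (x (k n))|
        ≤ ‖∑ n ∈ N, |A (μ n) n| • x (k n)‖ := by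
      have := star_ineq hu hf hk_mono.injective N (fun n => |A (μ n) n|)
      calc ∑ n ∈ N, |A (μ n) n| * |f (x (k n))|
          = ∑ n ∈ N, |(fun n => |A (μ n) n|) n| * |f (x (k n))| := by
            refine Finset.sum_congr rfl fun n _ => ?_
            rw [abs_abs]
        _ ≤ _ := this
    have hNspec : ∀ n ∈ N, n < r ∧ p (μ n) < k n ∧ k n ≤ q (μ n) := by
      intro n hn
      simp only [hN, Finset.mem_biUnion] at hn
      obtain ⟨mm, hmm, hn'⟩ := hn
      simp only [hF', Finset.mem_filter, Finset.mem_range] at hn'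
      have e := hμuniq n mm (Finset.mem_range.mp hmm) hn'.2.1 hn'.2.2
      exact ⟨hn'.1, e ▸ hn'.2.1, e ▸ hn'.2.2⟩
    have habs : ‖∑ n ∈ N, |A (μ n) n| • x (k n)‖ = ‖∑ n ∈ N, A (μ n) n • x (k n)‖ := by
      have e1 : ∑ n ∈ N, |A (μ n) n| • x (k n)
          = ∑ n ∈ N, ((fun n => if A (μ n) n < 0 then (-1:ℝ) else 1) n * A (μ n) n) • x (k n) := by
        refine Finset.sum_congr rfl fun n _ => ?_
        have e : |A (μ n) n| = (if A (μ n) n < 0 then (-1:ℝ) else 1) * A (μ n) n := by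
          by_cases h : A (μ n) n < 0
          · rw [if_pos h, abs_of_neg h]; ring
          · rw [if_neg h, abs_of_nonneg (not_lt.mp h)]; ring
        rw [e]
      rw [e1]
      refine uncond_inj hu hk_mono.injective N _ _ ?_
      intro n
      by_cases h : A (μ n) n < 0
      · right; rw [if_pos h]
      · left; rw [if_neg h]
    have hconf : ‖∑ n ∈ N, A (μ n) n • x (k n)‖ ≤ jamesNorm x a := by
      have e2 : ∑ n ∈ N, A (μ n) n • x (k n)
          = ∑ n ∈ N, (∑ j ∈ Finset.Icc (k n) (min (q (μ n)) (m n)), a j) • x (k n) := by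
        refine Finset.sum_congr rfl fun n hn => ?_
        obtain ⟨_, h1, _⟩ := hNspec n hn
        simp only [hA]
        rw [max_eq_right (le_of_lt h1)]
      rw [e2]
      refine config_le_jamesNorm x hbdd _ k (fun n => min (q (μ n)) (m n)) ?_ ?_
      · intro n hn
        obtain ⟨_, _, h2⟩ := hNspec n hn
        exact le_min h2 (hkm n)
      · intro n _ n' _ hlt
        calc min (q (μ n)) (m n) ≤ m n := min_le_right _ _
          _ < k n' := blocks_m_lt_k hkm hmk hlt
    calc ‖W2‖ = g W2 := hgW.symm
      _ = ∑ n ∈ N, φ n := hgW2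
      _ ≤ ∑ n ∈ N, |A (μ n) n| * |f (x (k n))| := Finset.sum_le_sum hφle
      _ ≤ ‖∑ n ∈ N, |A (μ n) n| • x (k n)‖ := hstar
      _ = ‖∑ n ∈ N, A (μ n) n • x (k n)‖ := habs
      _ ≤ jamesNorm x a := hconf
      _ ≤ 1 := ha1
  linarith

lemma key_V_bound {x : ℕ → X} (hnorm : ∀ i, ‖x i‖ = 1) (hu : OneUnconditional x)
    (l : ℕ → ℝ)
    (hS1bdd : BddAbove {v | ∃ a : ℕ → ℝ, (Function.support a).Finite ∧ jamesNorm x a ≤ 1 ∧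
      v = |∑ᶠ i, l i * a i|})
    {a : ℕ → ℝ} (hafin : (Function.support a).Finite) (ha1 : jamesNorm x a ≤ 1)
    (r : ℕ) {k m : ℕ → ℕ} (hkm : ∀ n, k n ≤ m n) (hmk : ∀ n, m n < k (n + 1)) :
    ‖∑ n ∈ Finset.range r, (∑ i ∈ Finset.Icc (k n) (m n), l i * a i) • x (k n)‖
      ≤ 2 * jamesDualNorm x l := by
  classical
  set V := ∑ n ∈ Finset.range r, (∑ i ∈ Finset.Icc (k n) (m n), l i * a i) • x (k n) with hV
  obtain ⟨f, hf1, hfV⟩ := exists_dual_vector'' ℝ V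
  set b : ℕ → ℝ := fun i =>
    (∑ n ∈ Finset.range r, if i ∈ Finset.Icc (k n) (m n) then f (x (k n)) else 0) * a i
    with hbdef
  have hbfin : (Function.support b).Finite := by
    refine hafin.subset ?_
    intro i hi
    simp only [Function.mem_support] at hi ⊢
    intro h0
    apply hi
    simp only [hbdef, h0, mul_zero]
  have hJb : jamesNorm x b ≤ 2 :=
    key_b_bound hnorm hu hf1 (jamesSet_bddAbove x hnorm hafin) ha1 r hkm hmk
  have hT : ∀ n, n < r → ∀ j ∈ Finset.Icc (k n) (m n),
      (∑ n' ∈ Finset.range r, if j ∈ Finset.Icc (k n') (m n') then f (x (k n')) else 0)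
        = f (x (k n)) := by
    intro n hn j hj
    rw [Finset.sum_eq_single_of_mem n (Finset.mem_range.mpr hn)]
    · rw [if_pos hj]
    · intro n' _ hne
      rw [if_neg (blocks_disjoint hkm hmk hne.symm hj)]
  have hfV2 : f V = ∑ n ∈ Finset.range r, ∑ j ∈ Finset.Icc (k n) (m n), l j * b j := by
    rw [hV, map_sum]
    refine Finset.sum_congr rfl fun n hn => ?_
    rw [map_smul, smul_eq_mul, Finset.sum_mul]
    refine Finset.sum_congr rfl fun j hj => ?_
    simp only [hbdef]
    rw [hT n (Finset.mem_range.mp hn) j hj]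
    ring
  have hdisj2 : ∀ n ∈ Finset.range r, ∀ n' ∈ Finset.range r, n ≠ n' →
      Disjoint (Finset.Icc (k n) (m n)) (Finset.Icc (k n') (m n')) := by
    intro n _ n' _ hne
    rw [Finset.disjoint_left]
    intro j hj
    exact blocks_disjoint hkm hmk hne hj
  have hfV3 : ∑ᶠ i, l i * b i
      = ∑ n ∈ Finset.range r, ∑ j ∈ Finset.Icc (k n) (m n), l j * b j := by
    have hsupp : Function.support (fun i => l i * b i)
        ⊆ ↑((Finset.range r).biUnion (fun n => Finset.Icc (k n) (m n))) := by
      intro i hi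
      simp only [Function.mem_support] at hi
      by_contra hns
      apply hi
      have hb0 : b i = 0 := by
        simp only [hbdef]
        have hz : (∑ n ∈ Finset.range r,
            if i ∈ Finset.Icc (k n) (m n) then f (x (k n)) else 0) = 0 := by
          refine Finset.sum_eq_zero fun n hn => ?_
          rw [if_neg]
          intro hmem
          apply hns
          simp only [Finset.coe_biUnion, Set.mem_iUnion, Finset.mem_coe]
          exact ⟨n, hn, hmem⟩
        rw [hz, zero_mul]
      rw [hb0, mul_zero]
    rw [finsum_eq_sum_of_support_subset _ hsupp]
    exact Finset.sum_biUnion hdisj2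
  have hbdd_b : BddAbove (jamesSet x b) := jamesSet_bddAbove x hnorm hbfin
  have hhalf : jamesNorm x (fun i => b i / 2) ≤ 1 := by
    refine Real.sSup_le ?_ zero_le_one
    rintro w ⟨s, p, q, hpq, hqp, rfl⟩
    have e : ∑ mm ∈ Finset.range s,
          (∑ j ∈ Finset.Icc (p mm) (q mm), (fun i => b i / 2) j) • x (p mm)
        = (1/2 : ℝ) • ∑ mm ∈ Finset.range s,
            (∑ j ∈ Finset.Icc (p mm) (q mm), b j) • x (p mm) := by
      rw [Finset.smul_sum]
      refine Finset.sum_congr rfl fun mm _ => ?_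
      rw [smul_smul]
      congr 1
      rw [← Finset.sum_div]
      ring
    rw [e, norm_smul, Real.norm_eq_abs]
    have hmem : ‖∑ mm ∈ Finset.range s,
        (∑ j ∈ Finset.Icc (p mm) (q mm), b j) • x (p mm)‖ ∈ jamesSet x b :=
      ⟨s, p, q, hpq, hqp, rfl⟩
    have h2 : ‖∑ mm ∈ Finset.range s,
        (∑ j ∈ Finset.Icc (p mm) (q mm), b j) • x (p mm)‖ ≤ 2 :=
      le_trans (le_csSup hbdd_b hmem) hJb
    rw [abs_of_nonneg (by norm_num : (0:ℝ) ≤ 1/2)]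
    linarith
  have hfin2 : (Function.support (fun i => b i / 2)).Finite := by
    refine hbfin.subset ?_
    intro i hi
    simp only [Function.mem_support] at hi ⊢
    intro h0
    apply hi
    rw [h0, zero_div]
  have hle : |∑ᶠ i, l i * (b i / 2)| ≤ jamesDualNorm x l :=
    le_csSup hS1bdd ⟨fun i => b i / 2, hfin2, hhalf, rfl⟩
  have hsupp1 : Function.support (fun i => l i * b i) ⊆ ↑hbfin.toFinset := by
    intro i hi
    simp only [Function.mem_support] at hi
    simp only [Set.Finite.coe_toFinset, Function.mem_support]
    intro h0
    apply hi
    rw [h0, mul_zero]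
  have hsupp2 : Function.support (fun i => l i * (b i / 2)) ⊆ ↑hbfin.toFinset := by
    intro i hi
    simp only [Function.mem_support] at hi
    simp only [Set.Finite.coe_toFinset, Function.mem_support]
    intro h0
    apply hi
    rw [h0, zero_div, mul_zero]
  have hsum2 : ∑ᶠ i, l i * b i = 2 * ∑ᶠ i, l i * (b i / 2) := by
    rw [finsum_eq_sum_of_support_subset _ hsupp1,
      finsum_eq_sum_of_support_subset _ hsupp2, Finset.mul_sum]
    exact Finset.sum_congr rfl fun i _ => by ring
  have hVfV : ‖V‖ = f V := by exact_mod_cast hfV.symm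
  calc ‖V‖ = f V := hVfV
    _ = ∑ᶠ i, l i * b i := hfV2.trans hfV3.symm
    _ = 2 * ∑ᶠ i, l i * (b i / 2) := hsum2
    _ ≤ 2 * |∑ᶠ i, l i * (b i / 2)| :=
        mul_le_mul_of_nonneg_left (le_abs_self _) (by norm_num)
    _ ≤ 2 * jamesDualNorm x l := mul_le_mul_of_nonneg_left hle (by norm_num)

/-- **Theorem.** For a normalized 1-unconditional sequence, the operator norm of the
diagonal multiplier with entries `λ` on the jamesification is equivalent to the dual
jamesification norm of `λ`, with product of constants at most 2. -/
theorem multiplier_norm_equiv_jamesDualNorm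
    (X : Type) [NormedAddCommGroup X] [NormedSpace ℝ X]
    (x : ℕ → X) (hnorm : ∀ i, ‖x i‖ = 1) (hu : OneUnconditional x) :
    ∃ c₁ c₂ : ℝ, 0 < c₁ ∧ 0 < c₂ ∧ c₁ * c₂ ≤ 2 ∧
      ∀ l : ℕ → ℝ, (Function.support l).Finite →
        jamesDualNorm x l ≤ c₁ * sSup (multiplierSet x l) ∧
        sSup (multiplierSet x l) ≤ c₂ * jamesDualNorm x l := by
  classical
  refine ⟨1, 2, one_pos, two_pos, by norm_num, fun l hl => ?_⟩
  set L := ∑ i ∈ hl.toFinset, |l i| with hL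
  have hmulfin : ∀ {a : ℕ → ℝ}, (Function.support a).Finite →
      (Function.support (fun i => l i * a i)).Finite := by
    intro a ha
    refine ha.subset fun i hi => ?_
    simp only [Function.mem_support] at hi ⊢
    intro h0; apply hi; rw [h0, mul_zero]
  have hsuppl : ∀ (a : ℕ → ℝ), Function.support (fun i => l i * a i) ⊆ ↑hl.toFinset := by
    intro a i hi
    simp only [Function.mem_support] at hi
    simp only [Set.Finite.coe_toFinset, Function.mem_support]
    intro h0; apply hi; rw [h0, zero_mul]
  have hterm : ∀ {a : ℕ → ℝ}, (Function.support a).Finite → jamesNorm x a ≤ 1 →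
      ∀ i ∈ hl.toFinset, |l i * a i| ≤ |l i| := by
    intro a hafin ha1 i _
    rw [abs_mul]
    have hai : |a i| ≤ 1 :=
      le_trans (abs_coord_le x hnorm a (jamesSet_bddAbove x hnorm hafin) i) ha1
    calc |l i| * |a i| ≤ |l i| * 1 := mul_le_mul_of_nonneg_left hai (abs_nonneg _)
      _ = |l i| := mul_one _
  have hS2elt : ∀ v ∈ multiplierSet x l, v ≤ L := by
    rintro v ⟨a, hafin, ha1, rfl⟩
    refine Real.sSup_le ?_ ?_
    · intro w hw
      refine le_trans (jamesSet_le_sum x hnorm (hsuppl a) w hw) ?_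
      rw [hL]
      exact Finset.sum_le_sum (hterm hafin ha1)
    · rw [hL]; exact Finset.sum_nonneg fun i _ => abs_nonneg _
  have hS2bdd : BddAbove (multiplierSet x l) := ⟨L, fun v hv => hS2elt v hv⟩
  have hzfin : (Function.support (0 : ℕ → ℝ)).Finite := by
    simp [Function.support_zero]
  have h0S2 : (0:ℝ) ∈ multiplierSet x l := by
    refine ⟨0, hzfin, ?_, ?_⟩
    · rw [jamesNorm_zero]; exact zero_le_one
    · have e : (fun i => l i * (0:ℕ→ℝ) i) = (0 : ℕ → ℝ) := by funext i; simp
      rw [e, jamesNorm_zero]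
  have hS2nonneg : 0 ≤ sSup (multiplierSet x l) := le_csSup hS2bdd h0S2
  have hS1bdd : BddAbove {v | ∃ a : ℕ → ℝ, (Function.support a).Finite ∧
      jamesNorm x a ≤ 1 ∧ v = |∑ᶠ i, l i * a i|} := by
    refine ⟨L, ?_⟩
    rintro v ⟨a, hafin, ha1, rfl⟩
    rw [finsum_eq_sum_of_support_subset _ (hsuppl a)]
    refine le_trans (Finset.abs_sum_le_sum_abs _ _) ?_
    rw [hL]
    exact Finset.sum_le_sum (hterm hafin ha1)
  have h0S1 : (0:ℝ) ∈ {v | ∃ a : ℕ → ℝ, (Function.support a).Finite ∧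
      jamesNorm x a ≤ 1 ∧ v = |∑ᶠ i, l i * a i|} := by
    refine ⟨0, hzfin, ?_, ?_⟩
    · rw [jamesNorm_zero]; exact zero_le_one
    · simp
  have hJDnonneg : 0 ≤ jamesDualNorm x l := le_csSup hS1bdd h0S1
  constructor
  · rw [one_mul, jamesDualNorm]
    refine Real.sSup_le ?_ hS2nonneg
    rintro v ⟨a, hafin, ha1, rfl⟩
    have hfin2 := hmulfin hafin
    refine le_trans (abs_finsum_le x hnorm hfin2 (jamesSet_bddAbove x hnorm hfin2)) ?_
    exact le_csSup hS2bdd ⟨a, hafin, ha1, rfl⟩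
  · refine Real.sSup_le ?_ (by linarith)
    rintro v ⟨a, hafin, ha1, rfl⟩
    rw [jamesNorm]
    refine Real.sSup_le ?_ (by linarith)
    rintro w ⟨r, k, m, hkm, hmk, rfl⟩
    exact key_V_bound hnorm hu l hS1bdd hafin ha1 r hkm hmk
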